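/- Let 2 ≤ m ≤ |A|, n = m+1. If b ∈ A^n satisfies |supp(b)| = m (i.e., b has exactly one repetition pattern realizing m distinct values), then there exist a unique a ∈ A^m and a unique two-element subset I of {1,...,n} with b = aδ_I; consequently the partial function f_{G,P,φ} : A^n_= → B defined by f_{G,P,φ}(aδ_I) = g^{φ(I)}(aρ_I) is well defined, provided g^I = g' ∘ supp on all tuples a with |supp(a)| < m. -/

import Mathlib

/-- `ofo l` lists the distinct elements of `l` in order of first occurrence. -/
def ofo {A : Type*} [DecidableEq A] (l : List A) : List A :=
  l.reverse.dedup.reverse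

/-- The order-of-first-occurrence list of a tuple. -/
def ofoFun {A : Type*} [DecidableEq A] {n : ℕ} (a : Fin n → A) : List A :=
  ofo (List.ofFn a)

/-- `delta i j hij : [n+1] → [n]` is the map δ_I for I = {i,j}, i < j (0-indexed). -/
def delta {n : ℕ} (i j : Fin (n + 1)) (hij : i < j) : Fin (n + 1) → Fin n := fun t =>
  if h : (t : ℕ) < (j : ℕ) then
    ⟨t, lt_of_lt_of_le h (Nat.lt_succ_iff.mp j.isLt)⟩
  else if h2 : (t : ℕ) = (j : ℕ) then
    ⟨i, lt_of_lt_of_le (Fin.lt_def.mp hij) (Nat.lt_succ_iff.mp j.isLt)⟩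
  else ⟨(t : ℕ) - 1, by have := t.isLt; omega⟩

/-- The 2-element subsets of Fin n. -/
def TwoSubset (n : ℕ) := {s : Finset (Fin n) // s.card = 2}

lemma delta_val {n : ℕ} (i j : Fin (n + 1)) (hij : i < j) (t : Fin (n + 1)) :
    (delta i j hij t : ℕ) = if (t : ℕ) < (j : ℕ) then (t : ℕ)
      else if (t : ℕ) = (j : ℕ) then (i : ℕ) else (t : ℕ) - 1 := by
  simp only [delta]
  split_ifs <;> rfl

def sec {n : ℕ} (j : Fin (n + 1)) (k : Fin n) : Fin (n + 1) :=
  if (k : ℕ) < (j : ℕ) then ⟨k, Nat.lt_succ_of_lt k.isLt⟩ else ⟨k + 1, Nat.succ_lt_succ k.isLt⟩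

lemma sec_val {n : ℕ} (j : Fin (n + 1)) (k : Fin n) :
    (sec j k : ℕ) = if (k : ℕ) < (j : ℕ) then (k : ℕ) else (k : ℕ) + 1 := by
  simp only [sec]; split_ifs <;> rfl

lemma delta_sec {n : ℕ} (i j : Fin (n + 1)) (hij : i < j) (k : Fin n) :
    delta i j hij (sec j k) = k := by
  have hj := Fin.lt_def.mp hij
  have hk := k.isLt
  apply Fin.ext
  rw [delta_val, sec_val]
  split_ifs <;> omega

lemma delta_surj {n : ℕ} (i j : Fin (n + 1)) (hij : i < j) :
    Function.Surjective (delta i j hij) := fun k => ⟨sec j k, delta_sec i j hij k⟩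

lemma sec_delta {n : ℕ} (i j : Fin (n + 1)) (hij : i < j) (t : Fin (n + 1)) :
    sec j (delta i j hij t) = if t = j then i else t := by
  have hj := Fin.lt_def.mp hij
  have ht := t.isLt
  rcases eq_or_ne t j with h | h
  · rw [if_pos h]
    apply Fin.ext
    rw [sec_val, delta_val]
    subst h
    split_ifs <;> omega
  · rw [if_neg h]
    have h' : (t : ℕ) ≠ (j : ℕ) := fun hh => h (Fin.ext hh)
    apply Fin.ext
    rw [sec_val, delta_val]
    split_ifs <;> omega

lemma delta_eq_delta_iff {n : ℕ} (i j : Fin (n + 1)) (hij : i < j) (s t : Fin (n + 1)) :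
    delta i j hij s = delta i j hij t ↔ s = t ∨ (s = i ∧ t = j) ∨ (s = j ∧ t = i) := by
  have hj := Fin.lt_def.mp hij
  have hs := s.isLt
  have ht := t.isLt
  simp only [Fin.ext_iff, delta_val]
  split_ifs <;> omega

lemma ncard_range_le' {α β : Type*} [Fintype α] (f : α → β) :
    (Set.range f).ncard ≤ Fintype.card α := by
  classical
  have : Set.range f = ↑(Finset.univ.image f) := by simp
  rw [this, Set.ncard_coe_finset]
  exact Finset.card_image_le.trans Finset.card_univ.le

lemma inj_of_ncard_range {α β : Type*} [Fintype α] (f : α → β)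
    (h : (Set.range f).ncard = Fintype.card α) : Function.Injective f := by
  classical
  have h1 : Set.range f = ↑(Finset.univ.image f) := by simp
  rw [h1, Set.ncard_coe_finset] at h
  have := Finset.card_image_iff.mp (h.trans Finset.card_univ.symm)
  intro x y hxy
  exact this (Finset.mem_coe.mpr (Finset.mem_univ x)) (Finset.mem_coe.mpr (Finset.mem_univ y)) hxy

lemma ninj_exists {α β : Type*} [LinearOrder α] {f : α → β} (h : ¬ Function.Injective f) :
    ∃ i j, i < j ∧ f i = f j := by
  simp only [Function.Injective, not_forall] at h
  obtain ⟨x, y, hfe, hne⟩ := h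
  rcases lt_or_gt_of_ne hne with h | h
  · exact ⟨x, y, h, hfe⟩
  · exact ⟨y, x, h, hfe.symm⟩

/-- for 2 ≤ m ≤ |A| and n = m+1, every b ∈ A^n with |supp(b)| = m has a
unique decomposition b = aδ_I; consequently the rule f(aδ_I) = g^{φ(I)}(aρ_I) defines a
well-defined (partial) function on the tuples with a repeated entry. -/
theorem small_arity_unique_decomposition_and_well_defined {A B : Type*}
    [Fintype A] [DecidableEq A] {m : ℕ}
    (hm : 2 ≤ m) (hmA : m ≤ Fintype.card A)
    (g' : Set A → B)
    (gI : TwoSubset (m + 1) → (Fin m → A) → B)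
    (hgI : ∀ (s : TwoSubset (m + 1)) (a : Fin m → A),
      (Set.range a).ncard < m → gI s a = g' (Set.range a))
    (P : TwoSubset (m + 1) → Equiv.Perm (Fin m))
    (φ : TwoSubset (m + 1) ≃ TwoSubset (m + 1)) :
    (∀ b : Fin (m + 1) → A, (Set.range b).ncard = m →
      (∃ (a : Fin m → A) (i j : Fin (m + 1)) (hij : i < j), b = a ∘ delta i j hij) ∧
      (∀ (a a' : Fin m → A) (i j i' j' : Fin (m + 1)) (hij : i < j) (hij' : i' < j'),
        b = a ∘ delta i j hij → b = a' ∘ delta i' j' hij' →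
        a = a' ∧ i = i' ∧ j = j')) ∧
    (∃ f : (Fin (m + 1) → A) → B,
      ∀ (a : Fin m → A) (i j : Fin (m + 1)) (hij : i < j),
        f (a ∘ delta i j hij) =
          gI (φ ⟨{i, j}, Finset.card_pair (ne_of_lt hij)⟩)
            (a ∘ (P ⟨{i, j}, Finset.card_pair (ne_of_lt hij)⟩))) := by
  classical
  have hrange : ∀ (a : Fin m → A) (i j : Fin (m + 1)) (hij : i < j),
      Set.range (a ∘ delta i j hij) = Set.range a :=
    fun a i j hij => (delta_surj i j hij).range_comp a
  -- existence
  have exi : ∀ b : Fin (m + 1) → A, ¬ Function.Injective b →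
      ∃ (a : Fin m → A) (i j : Fin (m + 1)) (hij : i < j), b = a ∘ delta i j hij := by
    intro b hb
    obtain ⟨i, j, hij, hbij⟩ := ninj_exists hb
    refine ⟨b ∘ sec j, i, j, hij, ?_⟩
    funext t
    simp only [Function.comp_apply]
    rw [sec_delta i j hij t]
    split_ifs with h
    · rw [h]; exact hbij.symm
    · rfl
  have hninj : ∀ b : Fin (m + 1) → A, (Set.range b).ncard = m → ¬ Function.Injective b := by
    intro b hb hinj
    have h1 : Set.range b = b '' Set.univ := (Set.image_univ).symm
    have h2 : (b '' Set.univ).ncard = (Set.univ : Set (Fin (m + 1))).ncard :=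
      Set.ncard_image_of_injective _ hinj
    rw [h1, h2, Set.ncard_univ, Nat.card_eq_fintype_card, Fintype.card_fin] at hb
    omega
  -- uniqueness
  have uniq : ∀ b : Fin (m + 1) → A, (Set.range b).ncard = m →
      ∀ (a a' : Fin m → A) (i j i' j' : Fin (m + 1)) (hij : i < j) (hij' : i' < j'),
        b = a ∘ delta i j hij → b = a' ∘ delta i' j' hij' →
        a = a' ∧ i = i' ∧ j = j' := by
    intro b hb a a' i j i' j' hij hij' h h'
    have hainj : Function.Injective a := by
      apply inj_of_ncard_range
      rw [Fintype.card_fin]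
      rw [h, hrange] at hb; exact hb
    have hbij' : b i' = b j' := by
      rw [h']; simp only [Function.comp_apply]
      congr 1
      rw [delta_eq_delta_iff]
      right; left; exact ⟨rfl, rfl⟩
    rw [h] at hbij'
    simp only [Function.comp_apply] at hbij'
    have hdd := hainj hbij'
    rw [delta_eq_delta_iff] at hdd
    have hii : i = i' ∧ j = j' := by
      rcases hdd with h1 | ⟨h1, h2⟩ | ⟨h1, h2⟩
      · exact absurd h1 (ne_of_lt hij')
      · exact ⟨h1.symm, h2.symm⟩
      · exfalso
        rw [h1, h2] at hij'
        exact absurd hij (lt_asymm hij')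
    obtain ⟨hi, hj⟩ := hii
    subst hi; subst hj
    refine ⟨?_, rfl, rfl⟩
    funext k
    obtain ⟨t, ht⟩ := delta_surj i j hij k
    have e1 : a k = b t := by rw [h, Function.comp_apply, ht]
    have e2 : a' k = b t := by
      rw [h', Function.comp_apply]
      congr 1
      exact ht.symm
    rw [e1, ← e2]
  refine ⟨fun b hb => ⟨exi b (hninj b hb), uniq b hb⟩, ?_⟩
  -- the well-defined function
  have hA : Nonempty A := Fintype.card_pos_iff.mp (by omega)
  obtain ⟨a0⟩ := hA
  have hne01 : (⟨0, by omega⟩ : Fin (m + 1)) ≠ ⟨1, by omega⟩ := by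
    simp [Fin.ext_iff]
  have hB : B := gI (φ ⟨{⟨0, by omega⟩, ⟨1, by omega⟩}, Finset.card_pair hne01⟩) (fun _ => a0)
  have key : ∀ (a a' : Fin m → A) (i j i' j' : Fin (m + 1)) (hij : i < j) (hij' : i' < j'),
      a = a' → i = i' → j = j' →
      gI (φ ⟨{i, j}, Finset.card_pair (ne_of_lt hij)⟩)
        (a ∘ (P ⟨{i, j}, Finset.card_pair (ne_of_lt hij)⟩)) =
      gI (φ ⟨{i', j'}, Finset.card_pair (ne_of_lt hij')⟩)
        (a' ∘ (P ⟨{i', j'}, Finset.card_pair (ne_of_lt hij')⟩)) := by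
    intro a a' i j i' j' hij hij' ha hi hj
    subst ha; subst hi; subst hj
    rfl
  set D : (Fin (m + 1) → A) → Prop := fun b =>
    ∃ x : (Fin m → A) × Fin (m + 1) × Fin (m + 1),
      ∃ h : x.2.1 < x.2.2, b = x.1 ∘ delta x.2.1 x.2.2 h with hD_def
  refine ⟨fun b => if h : D b then
      gI (φ ⟨{h.choose.2.1, h.choose.2.2}, Finset.card_pair (ne_of_lt h.choose_spec.choose)⟩)
        (h.choose.1 ∘
          (P ⟨{h.choose.2.1, h.choose.2.2}, Finset.card_pair (ne_of_lt h.choose_spec.choose)⟩))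
    else hB, ?_⟩
  intro a i j hij
  have hD : D (a ∘ delta i j hij) := ⟨(a, i, j), hij, rfl⟩
  beta_reduce
  rw [dif_pos hD]
  have heq : a ∘ delta i j hij =
      hD.choose.1 ∘ delta hD.choose.2.1 hD.choose.2.2 hD.choose_spec.choose :=
    hD.choose_spec.choose_spec
  by_cases hcard : (Set.range (a ∘ delta i j hij)).ncard = m
  · obtain ⟨ha, hi, hj⟩ := uniq _ hcard a hD.choose.1 i j hD.choose.2.1 hD.choose.2.2 hij
      hD.choose_spec.choose rfl heq
    exact key _ _ _ _ _ _ hD.choose_spec.choose hij ha.symm hi.symm hj.symm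
  · have hle : (Set.range (a ∘ delta i j hij)).ncard ≤ m := by
      rw [hrange]
      simpa using ncard_range_le' a
    have hlt : (Set.range (a ∘ delta i j hij)).ncard < m := lt_of_le_of_ne hle hcard
    have hr1 : Set.range (hD.choose.1 ∘
        ⇑(P ⟨{hD.choose.2.1, hD.choose.2.2},
          Finset.card_pair (ne_of_lt hD.choose_spec.choose)⟩)) =
        Set.range (a ∘ delta i j hij) := by
      refine ((P _).surjective.range_comp _).trans ?_
      conv_rhs => rw [heq]
      exact (hrange _ _ _ _).symm
    have hr2 : Set.range (a ∘ ⇑(P ⟨{i, j}, Finset.card_pair (ne_of_lt hij)⟩)) =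
        Set.range (a ∘ delta i j hij) := by
      exact ((P _).surjective.range_comp _).trans (hrange _ _ _ _).symm
    rw [hgI _ _ (by rw [hr1]; exact hlt), hgI _ _ (by rw [hr2]; exact hlt), hr1, hr2]
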